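/- Under the hypotheses of the Gaussian ground-state projection lemma (H Hermitian with nonnegative spectrum, gap lower bound Δ ≤ E₁ − E₀, trial state |ψ₀⟩ with ground-state overlap γ > 0, and τ ≥ (1/Δ)√(2 log(1/(εγ))) with ε ∈ (0,1]), the normalized state |ψ⟩ = e^{−τ²H²/2}|ψ₀⟩ / ‖e^{−τ²H²/2}|ψ₀⟩‖ satisfies Tr[|ψ⟩⟨ψ| O] − Tr[|E₀⟩⟨E₀| O] ≤ 2‖O‖ε for every bounded operator O. -/

import Mathlib

open Matrix
open scoped Matrix.Norms.L2Operator ComplexOrder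
open scoped InnerProductSpace

/-- Euclidean norm of a complex vector. -/
noncomputable def vecNorm {n : Type*} [Fintype n] (v : n → ℂ) : ℝ :=
  Real.sqrt (star v ⬝ᵥ v).re

section Helpers

variable {N : ℕ}

/-- The identity map to Euclidean space. -/
noncomputable def eu {N : ℕ} (x : Fin N → ℂ) : EuclideanSpace ℂ (Fin N) :=
  (WithLp.equiv 2 _).symm x

lemma inner_eu (x y : Fin N → ℂ) : ⟪eu x, eu y⟫_ℂ = star x ⬝ᵥ y :=
  by rw [dotProduct_comm]; rfl

lemma vecNorm_eq (x : Fin N → ℂ) : vecNorm x = ‖eu x‖ := by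
  rw [@norm_eq_sqrt_re_inner ℂ, inner_eu]; rfl

lemma vecNorm_nonneg (x : Fin N → ℂ) : 0 ≤ vecNorm x := Real.sqrt_nonneg _

lemma eu_smul (c : ℂ) (x : Fin N → ℂ) : eu (c • x) = c • eu x := rfl
lemma eu_add (x y : Fin N → ℂ) : eu (x + y) = eu x + eu y := rfl
lemma eu_sub (x y : Fin N → ℂ) : eu (x - y) = eu x - eu y := rfl

lemma vecNorm_smul (c : ℂ) (x : Fin N → ℂ) :
    vecNorm (c • x) = ‖c‖ * vecNorm x := by
  rw [vecNorm_eq, vecNorm_eq, eu_smul, norm_smul]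

lemma dot_self_eq (x : Fin N → ℂ) : star x ⬝ᵥ x = ((vecNorm x : ℝ) : ℂ) ^ 2 := by
  rw [← inner_eu, inner_self_eq_norm_sq_to_K, vecNorm_eq]
  rfl

/-- Move a matrix to the other side of a sesquilinear pairing. -/
lemma dot_mulVec_swap (M : Matrix (Fin N) (Fin N) ℂ) (x y : Fin N → ℂ) :
    star x ⬝ᵥ M.mulVec y = star (Mᴴ.mulVec x) ⬝ᵥ y := by
  rw [Matrix.dotProduct_mulVec]
  congr 1
  rw [Matrix.star_mulVec, Matrix.conjTranspose_conjTranspose]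

/-- Cauchy–Schwarz for the dot product. -/
lemma abs_dot_le (x y : Fin N → ℂ) :
    ‖star x ⬝ᵥ y‖ ≤ vecNorm x * vecNorm y := by
  rw [← inner_eu, vecNorm_eq, vecNorm_eq]
  exact norm_inner_le_norm _ _

lemma dot_conj (x y : Fin N → ℂ) :
    star x ⬝ᵥ y = (starRingEnd ℂ) (star y ⬝ᵥ x) := by
  simp only [dotProduct, Pi.star_apply, map_sum, _root_.map_mul,
    Complex.conj_conj, RingHomCompTriple.comp_apply]
  exact Finset.sum_congr rfl fun i _ => by simp [mul_comm]

noncomputable def mulVecCLM (u : Fin N → ℂ) : Matrix (Fin N) (Fin N) ℂ →L[ℂ] (Fin N → ℂ) :=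
  LinearMap.toContinuousLinearMap
    { toFun := fun A => A.mulVec u
      map_add' := fun A B => Matrix.add_mulVec A B u
      map_smul' := fun c A => Matrix.smul_mulVec c A u }

lemma exp_mulVec_eigen (M : Matrix (Fin N) (Fin N) ℂ) (u : Fin N → ℂ) (μ : ℂ)
    (h : M.mulVec u = μ • u) :
    (NormedSpace.exp M).mulVec u = Complex.exp μ • u := by
  have hpow : ∀ k : ℕ, (M ^ k).mulVec u = μ ^ k • u := by
    intro k; induction k with
    | zero => simp
    | succ k ih =>
      rw [pow_succ, ← Matrix.mulVec_mulVec, h, Matrix.mulVec_smul, ih, smul_smul, pow_succ,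
        mul_comm]
  have hsum : Summable fun n : ℕ => (n.factorial⁻¹ : ℂ) • M ^ n :=
    NormedSpace.expSeries_summable' (𝕂 := ℂ) M
  have hmain : (mulVecCLM u) (NormedSpace.exp M)
      = ∑' n : ℕ, (mulVecCLM u) ((n.factorial⁻¹ : ℂ) • M ^ n) := by
    rw [NormedSpace.exp_eq_tsum ℂ]
    exact (mulVecCLM u).map_tsum hsum
  have hL : ∀ A : Matrix (Fin N) (Fin N) ℂ, (mulVecCLM u) A = A.mulVec u := fun _ => rfl
  rw [hL] at hmain
  rw [hmain]
  have hterm : ∀ n : ℕ, (mulVecCLM u) ((n.factorial⁻¹ : ℂ) • M ^ n)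
      = ((n.factorial⁻¹ : ℂ) * μ ^ n) • u := by
    intro n
    rw [_root_.map_smul, hL, hpow, smul_smul]
  rw [tsum_congr hterm, Summable.tsum_smul_const ?_]
  · congr 1
    rw [Complex.exp_eq_exp_ℂ, NormedSpace.exp_eq_tsum ℂ]
    exact tsum_congr fun n => (smul_eq_mul ..).symm
  · simpa [smul_eq_mul] using NormedSpace.expSeries_summable' (𝕂 := ℂ) μ

/-- Pythagoras. -/
lemma pyth (x y : Fin N → ℂ) (h : star x ⬝ᵥ y = 0) :
    vecNorm (x + y) ^ 2 = vecNorm x ^ 2 + vecNorm y ^ 2 := by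
  rw [vecNorm_eq, vecNorm_eq, vecNorm_eq, eu_add, @norm_add_sq ℂ]
  rw [inner_eu, h]
  simp

/-- Existence of an orthonormal eigenbasis, packaged with plain vectors. -/
lemma exists_eigbasis {N : ℕ} (H : Matrix (Fin N) (Fin N) ℂ) (hH : H.IsHermitian) :
    ∃ (u : Fin N → Fin N → ℂ) (lam : Fin N → ℝ),
      (∀ i, u i ≠ 0) ∧ (∀ i, H.mulVec (u i) = ((lam i : ℝ) : ℂ) • u i) ∧
      (∀ x : Fin N → ℂ,
        vecNorm x = Real.sqrt (∑ i, ‖star (u i) ⬝ᵥ x‖ ^ 2)) := by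
  classical
  refine ⟨fun i => ⇑(hH.eigenvectorBasis i), hH.eigenvalues, ?_, ?_, ?_⟩
  · intro i h0
    exact hH.eigenvectorBasis.orthonormal.ne_zero i (by ext j; exact congrFun h0 j)
  · intro i
    rw [hH.mulVec_eigenvectorBasis i]
    ext j
    simp [Pi.smul_apply, Complex.real_smul]
  · intro x
    rw [vecNorm_eq, ← hH.eigenvectorBasis.repr.norm_map (eu x), EuclideanSpace.norm_eq]
    congr 1
    apply Finset.sum_congr rfl
    intro i _
    rw [hH.eigenvectorBasis.repr_apply_apply]
    have : ⟪hH.eigenvectorBasis i, eu x⟫_ℂ = star ⇑(hH.eigenvectorBasis i) ⬝ᵥ x := by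
      rw [dotProduct_comm]; rfl
    rw [this]

end Helpers

set_option maxHeartbeats 4000000 in
/-- ground state observable projection: under the Gaussian ground-state
projection hypotheses, the normalized state ψ = e^{−τ²H²/2}ψ₀ / ‖e^{−τ²H²/2}ψ₀‖ satisfies
Tr[|ψ⟩⟨ψ| O] − Tr[|E₀⟩⟨E₀| O] ≤ 2‖O‖ε for every observable O. -/
theorem stmt_5 {N : ℕ} (H : Matrix (Fin N) (Fin N) ℂ) (hH : H.IsHermitian)
    (hpos : H.PosSemidef)
    (E₀ Δ ε τ γ : ℝ) (hΔ : 0 < Δ)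
    (v : Fin N → ℂ) (hv : vecNorm v = 1) (hEv : H.mulVec v = (E₀ : ℂ) • v)
    (hE₀ : 0 ≤ E₀)
    (hgap : ∀ (μ : ℝ) (w : Fin N → ℂ), w ≠ 0 → H.mulVec w = (μ : ℂ) • w →
      star v ⬝ᵥ w = 0 → E₀ + Δ ≤ μ)
    (ψ₀ : Fin N → ℂ) (hψ₀ : vecNorm ψ₀ = 1)
    (hγ : γ = ‖star ψ₀ ⬝ᵥ v‖) (hγpos : 0 < γ)
    (hε : 0 < ε) (hε1 : ε ≤ 1)
    (hτ : (1 / Δ) * Real.sqrt (2 * Real.log (1 / (ε * γ))) ≤ τ)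
    (ψt ψ : Fin N → ℂ)
    (hψt : ψt = (NormedSpace.exp (-((τ ^ 2 / 2 : ℝ) : ℂ) • (H * H))).mulVec ψ₀)
    (hψ : ψ = ((vecNorm ψt : ℝ) : ℂ)⁻¹ • ψt)
    (O : Matrix (Fin N) (Fin N) ℂ) :
    ((vecMulVec ψ (star ψ) * O).trace - (vecMulVec v (star v) * O).trace).re
      ≤ 2 * ‖O‖ * ε := by
  -- basic setup
  set c : ℝ := τ ^ 2 / 2 with hc_def
  have hτ0 : 0 ≤ τ := le_trans (by positivity) hτ
  have hc : 0 ≤ c := by positivity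
  set A : Matrix (Fin N) (Fin N) ℂ := -((c : ℝ) : ℂ) • (H * H) with hA_def
  set G : Matrix (Fin N) (Fin N) ℂ := NormedSpace.exp A with hG_def
  -- G is Hermitian
  have hGH : Gᴴ = G := by
    rw [hG_def, ← Matrix.exp_conjTranspose]
    congr 1
    rw [hA_def, Matrix.conjTranspose_smul, Matrix.conjTranspose_mul, hH.eq]
    congr 1
    simp
  -- eigenvector action of G
  have hGeig : ∀ (x : Fin N → ℂ) (μ : ℝ), H.mulVec x = (μ : ℂ) • x →
      G.mulVec x = ((Real.exp (-(c * μ ^ 2)) : ℝ) : ℂ) • x := by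
    intro x μ hx
    have hAx : A.mulVec x = ((-(c * μ ^ 2) : ℝ) : ℂ) • x := by
      rw [hA_def, Matrix.smul_mulVec, ← Matrix.mulVec_mulVec, hx, Matrix.mulVec_smul, hx,
        smul_smul, smul_smul]
      congr 1
      push_cast
      ring
    rw [hG_def, exp_mulVec_eigen A x _ hAx, ← Complex.ofReal_exp]
  have hGv : G.mulVec v = ((Real.exp (-(c * E₀ ^ 2)) : ℝ) : ℂ) • v := hGeig v E₀ hEv
  clear_value G
  clear_value A
  set e₀ : ℝ := Real.exp (-(c * E₀ ^ 2)) with he₀_def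
  set e₁ : ℝ := Real.exp (-(c * (E₀ + Δ) ^ 2)) with he₁_def
  have he₀pos : 0 < e₀ := Real.exp_pos _
  have he₁pos : 0 < e₁ := Real.exp_pos _
  -- γ ≤ 1
  have hγ1 : γ ≤ 1 := by
    rw [hγ]
    calc ‖star ψ₀ ⬝ᵥ v‖ ≤ vecNorm ψ₀ * vecNorm v := abs_dot_le _ _
      _ = 1 := by rw [hψ₀, hv]; ring
  -- the key exponential estimate
  have hkey : e₁ ≤ ε * γ * e₀ := by
    have hεγpos : 0 < ε * γ := mul_pos hε hγpos
    have hεγ1 : ε * γ ≤ 1 := by nlinarith only [hε, hε1, hγpos, hγ1]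
    have hL : 0 ≤ Real.log (1 / (ε * γ)) := by
      apply Real.log_nonneg
      rw [le_div_iff₀ hεγpos]
      linarith
    set L : ℝ := Real.log (1 / (ε * γ)) with hL_def
    have hτΔ : Real.sqrt (2 * L) ≤ τ * Δ := by
      have := hτ
      rw [div_mul_eq_mul_div, one_mul, div_le_iff₀ hΔ] at this
      exact this
    have hτΔ2 : 2 * L ≤ (τ * Δ) ^ 2 := by
      have h1 : Real.sqrt (2 * L) ^ 2 = 2 * L := Real.sq_sqrt (by linarith)
      nlinarith only [h1, hτΔ, Real.sqrt_nonneg (2 * L)]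
    have hcΔ : L ≤ c * Δ ^ 2 := by
      have hexp : (τ * Δ) ^ 2 = τ ^ 2 * Δ ^ 2 := by ring
      rw [hc_def]
      nlinarith only [hτΔ2, hexp]
    have hexpL : Real.exp (-L) = ε * γ := by
      rw [hL_def, Real.log_div one_ne_zero (ne_of_gt hεγpos), Real.log_one]
      simp [Real.exp_log hεγpos]
    have : e₁ = e₀ * Real.exp (-(c * (2 * E₀ * Δ + Δ ^ 2))) := by
      rw [he₁_def, he₀_def, ← Real.exp_add]
      congr 1
      ring
    rw [this]
    have h2 : Real.exp (-(c * (2 * E₀ * Δ + Δ ^ 2))) ≤ ε * γ := by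
      rw [← hexpL]
      apply Real.exp_le_exp.mpr
      have : c * Δ ^ 2 ≤ c * (2 * E₀ * Δ + Δ ^ 2) := by nlinarith only [mul_nonneg (mul_nonneg hc hE₀) hΔ.le]
      linarith
    nlinarith only [this, h2, he₀pos, Real.exp_pos (-(c * (2 * E₀ * Δ + Δ ^ 2)))]
  -- spectral bound on the orthogonal complement
  have hvv : star v ⬝ᵥ v = 1 := by
    rw [dot_self_eq, hv]
    norm_num
  have hspec : ∀ w : Fin N → ℂ, star v ⬝ᵥ w = 0 →
      vecNorm (G.mulVec w) ≤ e₁ * vecNorm w := by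
    intro w hw
    classical
    obtain ⟨u, lam, hune, heig, hrepr⟩ := exists_eigbasis H hH
    have hlow : ∀ i, (star (u i) ⬝ᵥ w ≠ 0) → E₀ + Δ ≤ lam i := by
      intro i hne
      by_cases hvb : star v ⬝ᵥ u i = 0
      · exact hgap (lam i) _ (hune i) (heig i) hvb
      · exfalso
        have hlamE : (lam i : ℂ) = (E₀ : ℂ) := by
          have h1 : star v ⬝ᵥ H.mulVec (u i) = (lam i : ℂ) * (star v ⬝ᵥ u i) := by
            rw [heig i, dotProduct_smul, smul_eq_mul]
          have h2 : star v ⬝ᵥ H.mulVec (u i) = (E₀ : ℂ) * (star v ⬝ᵥ u i) := by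
            rw [dot_mulVec_swap, hH.eq, hEv, star_smul, smul_dotProduct]
            simp [Complex.conj_ofReal, smul_eq_mul]
          exact mul_right_cancel₀ hvb (h1.symm.trans h2)
        have hlamE' : lam i = E₀ := by exact_mod_cast hlamE
        set w' : Fin N → ℂ := u i - (star v ⬝ᵥ u i) • v with hw'_def
        have hw'orth : star v ⬝ᵥ w' = 0 := by
          simp [hw'_def, dotProduct_sub, dotProduct_smul, hvv, smul_eq_mul]
        have hw'eig : H.mulVec w' = (E₀ : ℂ) • w' := by
          rw [hw'_def, Matrix.mulVec_sub, Matrix.mulVec_smul, heig i, hlamE', hEv]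
          ext j
          simp only [Pi.smul_apply, Pi.sub_apply, smul_eq_mul]
          ring
        by_cases hw'0 : w' = 0
        · have hbi : u i = (star v ⬝ᵥ u i) • v := sub_eq_zero.mp hw'0
          apply hne
          rw [hbi, star_smul, smul_dotProduct, hw]
          simp
        · have := hgap E₀ w' hw'0 hw'eig hw'orth
          linarith
    have hcoef : ∀ i, star (u i) ⬝ᵥ (G.mulVec w)
        = ((Real.exp (-(c * lam i ^ 2)) : ℝ) : ℂ) * (star (u i) ⬝ᵥ w) := by
      intro i
      rw [dot_mulVec_swap, hGH, hGeig (u i) (lam i) (heig i), star_smul,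
        smul_dotProduct]
      simp only [smul_eq_mul, RCLike.star_def, Complex.conj_ofReal]
    have hterm : ∀ i, ‖star (u i) ⬝ᵥ G.mulVec w‖ ^ 2
        ≤ e₁ ^ 2 * ‖star (u i) ⬝ᵥ w‖ ^ 2 := by
      intro i
      rw [hcoef i, norm_mul, Complex.norm_of_nonneg (Real.exp_pos _).le]
      by_cases h0 : star (u i) ⬝ᵥ w = 0
      · simp [h0]
      · have hlami := hlow i h0
        have hle : Real.exp (-(c * lam i ^ 2)) ≤ e₁ := by
          rw [he₁_def]
          apply Real.exp_le_exp.mpr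
          have hsq : (E₀ + Δ) ^ 2 ≤ lam i ^ 2 := by nlinarith only [hlami, hE₀, hΔ]
          nlinarith only [mul_le_mul_of_nonneg_left hsq hc]
        have h2 : Real.exp (-(c * lam i ^ 2)) ^ 2 ≤ e₁ ^ 2 := by
          nlinarith only [hle, Real.exp_pos (-(c * lam i ^ 2))]
        have h3 : (0:ℝ) ≤ ‖star (u i) ⬝ᵥ w‖ ^ 2 := sq_nonneg _
        calc (Real.exp (-(c * lam i ^ 2)) * ‖star (u i) ⬝ᵥ w‖) ^ 2
            = Real.exp (-(c * lam i ^ 2)) ^ 2 * ‖star (u i) ⬝ᵥ w‖ ^ 2 := by ring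
          _ ≤ e₁ ^ 2 * ‖star (u i) ⬝ᵥ w‖ ^ 2 := mul_le_mul_of_nonneg_right h2 h3
    rw [hrepr, hrepr]
    calc Real.sqrt (∑ i, ‖star (u i) ⬝ᵥ G.mulVec w‖ ^ 2)
        ≤ Real.sqrt (∑ i, e₁ ^ 2 * ‖star (u i) ⬝ᵥ w‖ ^ 2) :=
          Real.sqrt_le_sqrt (Finset.sum_le_sum fun i _ => hterm i)
      _ = e₁ * Real.sqrt (∑ i, ‖star (u i) ⬝ᵥ w‖ ^ 2) := by
          rw [← Finset.mul_sum, Real.sqrt_mul (sq_nonneg e₁), Real.sqrt_sq he₁pos.le]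
  -- decomposition of ψ₀
  set a : ℂ := star v ⬝ᵥ ψ₀ with ha_def
  have haγ : ‖a‖ = γ := by
    rw [ha_def, dot_conj, Complex.norm_conj, hγ]
  set w : Fin N → ℂ := ψ₀ - a • v with hw_def
  have hw_orth : star v ⬝ᵥ w = 0 := by
    rw [hw_def]
    simp [dotProduct_sub, dotProduct_smul, hvv, smul_eq_mul, ← ha_def]
  have hψ₀dec : ψ₀ = a • v + w := by rw [hw_def]; abel
  have hproj_orth : star (a • v) ⬝ᵥ w = 0 := by
    rw [star_smul, smul_dotProduct, hw_orth]
    simp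
  have hpy0 : (1 : ℝ) = γ ^ 2 + vecNorm w ^ 2 := by
    have h1 := pyth (a • v) w hproj_orth
    rw [← hψ₀dec, hψ₀, vecNorm_smul, haγ, hv, mul_one] at h1
    linarith
  -- decomposition of ψt
  have hψt_dec : ψt = (a * (e₀ : ℂ)) • v + G.mulVec w := by
    rw [hψt]
    conv_lhs => rw [hψ₀dec]
    rw [Matrix.mulVec_add, Matrix.mulVec_smul, hGv, smul_smul]
  have hGw_orth : star v ⬝ᵥ (G.mulVec w) = 0 := by
    rw [dot_mulVec_swap, hGH, hGv, star_smul, smul_dotProduct, hw_orth]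
    simp
  have hGw_orth' : star ((a * (e₀ : ℂ)) • v) ⬝ᵥ (G.mulVec w) = 0 := by
    rw [star_smul, smul_dotProduct, hGw_orth]
    simp
  have hpyt : vecNorm ψt ^ 2 = (γ * e₀) ^ 2 + vecNorm (G.mulVec w) ^ 2 := by
    have h1 := pyth ((a * (e₀ : ℂ)) • v) (G.mulVec w) hGw_orth'
    rw [← hψt_dec, vecNorm_smul, norm_mul, haγ, Complex.norm_of_nonneg he₀pos.le, hv,
      mul_one] at h1
    exact h1
  have hGwbound : vecNorm (G.mulVec w) ≤ e₁ * vecNorm w := hspec w hw_orth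
  have hw1 : vecNorm w ≤ 1 := by nlinarith only [hpy0, hγpos, vecNorm_nonneg w]
  have hnt2 : vecNorm ψt ^ 2 ≤ γ ^ 2 * e₀ ^ 2 * (1 + ε ^ 2) := by
    have h1 : vecNorm (G.mulVec w) ^ 2 ≤ e₁ ^ 2 := by
      have ha : e₁ * vecNorm w ≤ e₁ * 1 := mul_le_mul_of_nonneg_left hw1 he₁pos.le
      have hb : vecNorm (G.mulVec w) ≤ e₁ := by linarith only [hGwbound, ha]
      nlinarith only [hb, vecNorm_nonneg (G.mulVec w)]
    have h2 : e₁ ^ 2 ≤ (ε * γ * e₀) ^ 2 := by nlinarith only [hkey, he₁pos]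
    nlinarith only [hpyt, h1, h2]
  have hntlb : γ * e₀ ≤ vecNorm ψt := by
    nlinarith only [hpyt, vecNorm_nonneg ψt, sq_nonneg (vecNorm (G.mulVec w)), mul_pos hγpos he₀pos]
  have hntpos : 0 < vecNorm ψt := lt_of_lt_of_le (mul_pos hγpos he₀pos) hntlb
  -- overlap
  have hz0 : star v ⬝ᵥ ψt = a * (e₀ : ℂ) := by
    rw [hψt_dec, dotProduct_add, dotProduct_smul, hvv, hGw_orth]
    simp
  set nt : ℝ := vecNorm ψt with hnt_def
  set z : ℂ := star v ⬝ᵥ ψ with hz_def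
  clear_value nt z
  have hzψ : z = ((nt : ℝ) : ℂ)⁻¹ * (a * (e₀ : ℂ)) := by
    rw [hz_def, hψ, dotProduct_smul, hz0, smul_eq_mul]
  have hzabs : ‖z‖ = γ * e₀ / nt := by
    rw [hzψ, norm_mul, norm_inv, norm_mul, haγ, Complex.norm_of_nonneg hntpos.le,
      Complex.norm_of_nonneg he₀pos.le]
    ring
  have hover : 1 - ε ^ 2 / 2 ≤ ‖z‖ := by
    have hε2 : ε ^ 2 ≤ 1 := by nlinarith only [hε, hε1]
    have h1 : (1 - ε ^ 2 / 2) ^ 2 * (1 + ε ^ 2) ≤ 1 := by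
      nlinarith only [pow_nonneg hε.le 4, hε2]
    have h2 : ‖z‖ ^ 2 = (γ * e₀) ^ 2 / nt ^ 2 := by rw [hzabs]; ring
    have h3 : (1 - ε ^ 2 / 2) ^ 2 ≤ ‖z‖ ^ 2 := by
      rw [h2, le_div_iff₀ (by positivity)]
      have h4 : (1 - ε ^ 2 / 2) ^ 2 * nt ^ 2
          ≤ (1 - ε ^ 2 / 2) ^ 2 * (γ ^ 2 * e₀ ^ 2 * (1 + ε ^ 2)) :=
        mul_le_mul_of_nonneg_left hnt2 (sq_nonneg _)
      have h6 : (1 - ε ^ 2 / 2) ^ 2 * (1 + ε ^ 2) * (γ ^ 2 * e₀ ^ 2)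
          ≤ 1 * (γ ^ 2 * e₀ ^ 2) := mul_le_mul_of_nonneg_right h1 (by positivity)
      nlinarith only [h4, h6]
    have h5 : (0:ℝ) ≤ 1 - ε ^ 2 / 2 := by nlinarith only [hε2]
    calc 1 - ε ^ 2 / 2 = Real.sqrt ((1 - ε ^ 2 / 2) ^ 2) := (Real.sqrt_sq h5).symm
      _ ≤ Real.sqrt (‖z‖ ^ 2) := Real.sqrt_le_sqrt h3
      _ = ‖z‖ := Real.sqrt_sq (norm_nonneg _)
  have hzpos : 0 < ‖z‖ := by
    have h6 : (0:ℝ) < 1 - ε ^ 2 / 2 := by nlinarith only [hε, hε1]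
    linarith only [h6, hover]
  -- phase adjustment
  set ph : ℂ := z / ((‖z‖ : ℝ) : ℂ) with hph_def
  have habsph : ‖ph‖ = 1 := by
    rw [hph_def, norm_div, Complex.norm_of_nonneg (norm_nonneg _), div_self (ne_of_gt hzpos)]
  have hph1 : ph * (starRingEnd ℂ) ph = 1 := by
    rw [Complex.mul_conj, Complex.normSq_eq_norm_sq, habsph]
    norm_num
  set v' : Fin N → ℂ := ph • v with hv'_def
  have hv'norm : vecNorm v' = 1 := by rw [hv'_def, vecNorm_smul, habsph, hv, one_mul]
  have hvv' : vecMulVec v' (star v') = vecMulVec v (star v) := by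
    ext i j
    simp only [Matrix.vecMulVec_apply, hv'_def, Pi.smul_apply, Pi.star_apply, smul_eq_mul,
      star_mul']
    have hph1' : ph * star ph = 1 := hph1
    linear_combination v i * star (v j) * hph1'
  have hzv' : star v' ⬝ᵥ ψ = ((‖z‖ : ℝ) : ℂ) := by
    have hnz : ((‖z‖ : ℝ) : ℂ) ≠ 0 := by
      simp [ne_of_gt hzpos]
    calc star v' ⬝ᵥ ψ = star ph * z := by
          rw [hv'_def, star_smul, smul_dotProduct, ← hz_def, smul_eq_mul]
      _ = (starRingEnd ℂ) ph * z := rfl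
      _ = ((‖z‖ : ℝ) : ℂ) := by
          rw [hph_def, map_div₀, Complex.conj_ofReal, div_mul_eq_mul_div,
            ← Complex.normSq_eq_conj_mul_self, Complex.normSq_eq_norm_sq]
          push_cast
          field_simp
  have hψnorm : vecNorm ψ = 1 := by
    rw [hψ, vecNorm_smul, norm_inv, Complex.norm_of_nonneg hntpos.le, ← hnt_def]
    field_simp
  -- distance bound
  have hinner : star ψ ⬝ᵥ v' = ((‖z‖ : ℝ) : ℂ) := by
    rw [dot_conj, hzv', Complex.conj_ofReal]
  have hdist2 : vecNorm (ψ - v') ^ 2 ≤ ε ^ 2 := by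
    have h1 := @norm_sub_sq ℂ _ _ _ _ (eu ψ) (eu v')
    rw [inner_eu, hinner] at h1
    have h2 : vecNorm (ψ - v') ^ 2 = ‖eu ψ - eu v'‖ ^ 2 := by rw [vecNorm_eq, eu_sub]
    rw [h2, h1, ← vecNorm_eq, ← vecNorm_eq, hψnorm, hv'norm]
    have h8 : ∀ r : ℝ, RCLike.re ((r : ℝ) : ℂ) = r := fun r => RCLike.ofReal_re r
    have h9 : ∀ r : ℝ, ((r : ℝ) : ℂ).re = r := fun r => Complex.ofReal_re r
    nlinarith only [hover, hε, hε1, h8 (‖z‖), h9 (‖z‖)]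
  have hdist : vecNorm (ψ - v') ≤ ε := by nlinarith only [hdist2, hε, vecNorm_nonneg (ψ - v')]
  -- operator norm bound
  have hO : ∀ x y : Fin N → ℂ,
      ‖star x ⬝ᵥ O.mulVec y‖ ≤ ‖O‖ * (vecNorm x * vecNorm y) := by
    intro x y
    have h1 : ‖star x ⬝ᵥ O.mulVec y‖ ≤ vecNorm x * vecNorm (O.mulVec y) :=
      abs_dot_le _ _
    have h2 : vecNorm (O.mulVec y) ≤ ‖O‖ * vecNorm y := by
      rw [vecNorm_eq, vecNorm_eq]
      exact O.l2_opNorm_mulVec (eu y)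
    calc ‖star x ⬝ᵥ O.mulVec y‖ ≤ vecNorm x * vecNorm (O.mulVec y) := h1
      _ ≤ vecNorm x * (‖O‖ * vecNorm y) :=
          mul_le_mul_of_nonneg_left h2 (vecNorm_nonneg x)
      _ = ‖O‖ * (vecNorm x * vecNorm y) := by ring
  -- trace identity
  have htr : ∀ x : Fin N → ℂ, (vecMulVec x (star x) * O).trace = star x ⬝ᵥ O.mulVec x := by
    intro x
    simp only [Matrix.trace, Matrix.diag, Matrix.mul_apply, Matrix.vecMulVec_apply,
      dotProduct, Matrix.mulVec, Pi.star_apply, Finset.mul_sum]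
    rw [Finset.sum_comm]
    apply Finset.sum_congr rfl
    intro i _
    apply Finset.sum_congr rfl
    intro j _
    ring
  -- final assembly
  set d : Fin N → ℂ := ψ - v' with hd_def
  have hsplit : star ψ ⬝ᵥ O.mulVec ψ - star v' ⬝ᵥ O.mulVec v'
      = star d ⬝ᵥ O.mulVec ψ + star v' ⬝ᵥ O.mulVec d := by
    rw [hd_def]
    simp only [star_sub, sub_dotProduct, Matrix.mulVec_sub, dotProduct_sub]
    ring
  rw [htr ψ, ← hvv', htr v']
  have hOnn : (0 : ℝ) ≤ ‖O‖ := norm_nonneg O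
  calc (star ψ ⬝ᵥ O.mulVec ψ - star v' ⬝ᵥ O.mulVec v').re
      ≤ ‖star ψ ⬝ᵥ O.mulVec ψ - star v' ⬝ᵥ O.mulVec v'‖ := Complex.re_le_norm _
    _ = ‖star d ⬝ᵥ O.mulVec ψ + star v' ⬝ᵥ O.mulVec d‖ := by rw [hsplit]
    _ ≤ ‖star d ⬝ᵥ O.mulVec ψ‖ + ‖star v' ⬝ᵥ O.mulVec d‖ :=
        norm_add_le _ _
    _ ≤ ‖O‖ * (vecNorm d * vecNorm ψ) + ‖O‖ * (vecNorm v' * vecNorm d) :=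
        add_le_add (hO d ψ) (hO v' d)
    _ = 2 * ‖O‖ * vecNorm d := by rw [hψnorm, hv'norm]; ring
    _ ≤ 2 * ‖O‖ * ε := by
        apply mul_le_mul_of_nonneg_left hdist (by positivity)
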